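/- Let X, X₁, X₂ be i.i.d. logistic random variables and η an independent exponential random variable with mean 1. Then X has the same distribution as min(X₁, X₂) + η. -/

import Mathlib

open MeasureTheory ProbabilityTheory

/-- The logistic distribution on ℝ, with density `(e^{x/2}+e^{-x/2})⁻²`. -/
noncomputable def logisticMeasure : Measure ℝ :=
  volume.withDensity fun x => ENNReal.ofReal ((Real.exp (x / 2) + Real.exp (-x / 2)) ^ 2)⁻¹

open Real Set Filter Topology

lemma logistic_density_eq (u : ℝ) :
    ((Real.exp (u / 2) + Real.exp (-u / 2)) ^ 2)⁻¹ = Real.exp u / (1 + Real.exp u) ^ 2 := by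
  have ha : Real.exp (-u / 2) = (Real.exp (u / 2))⁻¹ := by
    rw [← Real.exp_neg]; congr 1; ring
  have hu : Real.exp u = Real.exp (u / 2) ^ 2 := by
    rw [sq, ← Real.exp_add]; congr 1; ring
  have h0 : Real.exp (u / 2) ≠ 0 := (Real.exp_pos _).ne'
  rw [ha, hu]
  have h1 : (0:ℝ) < 1 + Real.exp (u/2) ^ 2 := by positivity
  field_simp
  ring

lemma logistic_integrableOn_Iic (x : ℝ) :
    IntegrableOn (fun u => Real.exp u / (1 + Real.exp u) ^ 2) (Iic x) := by
  apply (integrableOn_exp_Iic x).mono' ((Real.continuous_exp.div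
    ((continuous_const.add Real.continuous_exp).pow 2)
    (fun u => (pow_pos (by positivity : (0:ℝ) < 1 + Real.exp u) 2).ne')).aestronglyMeasurable)
  filter_upwards with u
  show ‖Real.exp u / (1 + Real.exp u) ^ 2‖ ≤ Real.exp u
  have hp : (0:ℝ) < 1 + Real.exp u := by positivity
  rw [Real.norm_eq_abs, abs_of_nonneg (by positivity)]
  exact div_le_self (Real.exp_pos u).le (by nlinarith [Real.exp_pos u])

lemma logistic_integral_Iic (x : ℝ) :
    ∫ u in Iic x, Real.exp u / (1 + Real.exp u) ^ 2 = (1 + Real.exp (-x))⁻¹ := by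
  have hderiv : ∀ u ∈ Iic x, HasDerivAt (fun u => -(1 + Real.exp u)⁻¹)
      (Real.exp u / (1 + Real.exp u) ^ 2) u := by
    intro u _
    have h := (((Real.hasDerivAt_exp u).const_add 1).inv (by positivity)).neg
    refine h.congr_deriv ?_
    field_simp
  have htend : Tendsto (fun u => -(1 + Real.exp u)⁻¹) atBot (𝓝 (-1)) := by
    have : Tendsto (fun u : ℝ => 1 + Real.exp u) atBot (𝓝 (1 + 0)) :=
      tendsto_const_nhds.add Real.tendsto_exp_atBot
    have := (this.inv₀ (by norm_num)).neg
    simpa using this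
  rw [integral_Iic_of_hasDerivAt_of_tendsto' hderiv (logistic_integrableOn_Iic x) htend]
  have h1 : (0:ℝ) < 1 + Real.exp x := by positivity
  rw [Real.exp_neg]
  have h2 : Real.exp x ≠ 0 := (Real.exp_pos _).ne'
  field_simp
  ring

lemma logistic_Iic (x : ℝ) :
    logisticMeasure (Iic x) = ENNReal.ofReal (1 + Real.exp (-x))⁻¹ := by
  rw [logisticMeasure, withDensity_apply _ measurableSet_Iic]
  have : ∫⁻ u in Iic x, ENNReal.ofReal ((Real.exp (u / 2) + Real.exp (-u / 2)) ^ 2)⁻¹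
      = ∫⁻ u in Iic x, ENNReal.ofReal (Real.exp u / (1 + Real.exp u) ^ 2) := by
    apply lintegral_congr; intro u; rw [logistic_density_eq]
  rw [this, ← ofReal_integral_eq_lintegral_ofReal (logistic_integrableOn_Iic x)
    (Filter.Eventually.of_forall fun u => by positivity), logistic_integral_Iic]
-- G s = 1 - ((1+e^s)⁻¹)^2 is the CDF of the min; k t = e^{-t} G(x-t)
lemma conv_hasDerivAt (x t : ℝ) :
    HasDerivAt (fun t => -Real.exp (-t) - Real.exp (-x) * (1 + Real.exp x * Real.exp (-t))⁻¹)
      (Real.exp (-t) * (1 - ((1 + Real.exp (x - t))⁻¹) ^ 2)) t := by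
  have he : HasDerivAt (fun t : ℝ => Real.exp (-t)) (-Real.exp (-t)) t := by
    exact ((Real.hasDerivAt_exp (-t)).comp t (hasDerivAt_neg t)).congr_deriv (by ring)
  have hinner : HasDerivAt (fun t : ℝ => 1 + Real.exp x * Real.exp (-t))
      (Real.exp x * -Real.exp (-t)) t := (he.const_mul (Real.exp x)).const_add 1
  have hinv := hinner.inv (by positivity)
  have h := he.neg.sub (hinv.const_mul (Real.exp (-x)))
  refine h.congr_deriv ?_
  have hxt : Real.exp (x - t) = Real.exp x * Real.exp (-t) := by
    rw [← Real.exp_add, sub_eq_add_neg]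
  have hx' : Real.exp (-x) = (Real.exp x)⁻¹ := Real.exp_neg x
  rw [hxt, hx']
  have h1 : (0:ℝ) < 1 + Real.exp x * Real.exp (-t) := by positivity
  have h2 : Real.exp x ≠ 0 := (Real.exp_pos _).ne'
  have h3 : Real.exp (-t) ≠ 0 := (Real.exp_pos _).ne'
  field_simp

lemma conv_nonneg (x t : ℝ) :
    0 ≤ Real.exp (-t) * (1 - ((1 + Real.exp (x - t))⁻¹) ^ 2) := by
  have h1 : (0:ℝ) < 1 + Real.exp (x - t) := by positivity
  have h2 : (1 + Real.exp (x - t))⁻¹ ≤ 1 := by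
    rw [inv_le_one_iff₀]; right; nlinarith [Real.exp_pos (x - t)]
  have h3 : (0:ℝ) ≤ (1 + Real.exp (x - t))⁻¹ := by positivity
  have h4 : ((1 + Real.exp (x - t))⁻¹) ^ 2 ≤ 1 := by nlinarith
  exact mul_nonneg (Real.exp_pos _).le (by linarith)

lemma conv_tendsto (x : ℝ) :
    Tendsto (fun t => -Real.exp (-t) - Real.exp (-x) * (1 + Real.exp x * Real.exp (-t))⁻¹)
      atTop (𝓝 (-Real.exp (-x))) := by
  have h0 : Tendsto (fun t : ℝ => Real.exp (-t)) atTop (𝓝 0) :=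
    Real.tendsto_exp_neg_atTop_nhds_zero
  have h1 : Tendsto (fun t : ℝ => 1 + Real.exp x * Real.exp (-t)) atTop (𝓝 (1 + Real.exp x * 0)) :=
    tendsto_const_nhds.add (h0.const_mul _)
  have h2 := h0.neg.sub ((h1.inv₀ (by norm_num)).const_mul (Real.exp (-x)))
  simpa using h2

lemma conv_integrableOn (x : ℝ) :
    IntegrableOn (fun t => Real.exp (-t) * (1 - ((1 + Real.exp (x - t))⁻¹) ^ 2)) (Ioi 0) :=
  integrableOn_Ioi_deriv_of_nonneg' (fun t _ => conv_hasDerivAt x t)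
    (fun t _ => conv_nonneg x t) (conv_tendsto x)

lemma conv_integral (x : ℝ) :
    ∫ t in Ioi 0, Real.exp (-t) * (1 - ((1 + Real.exp (x - t))⁻¹) ^ 2)
      = (1 + Real.exp (-x))⁻¹ := by
  rw [integral_Ioi_of_hasDerivAt_of_nonneg' (fun t _ => conv_hasDerivAt x t)
    (fun t _ => conv_nonneg x t) (conv_tendsto x)]
  have hx' : Real.exp (-x) = (Real.exp x)⁻¹ := Real.exp_neg x
  rw [hx']
  have h1 : (0:ℝ) < 1 + Real.exp x := by positivity
  have h2 : Real.exp x ≠ 0 := (Real.exp_pos _).ne'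
  simp only [neg_zero, Real.exp_zero, mul_one]
  field_simp
  ring

theorem min_logistic_plus_exponential
    {Ω : Type*} [MeasureSpace Ω] (P : Measure Ω) [IsProbabilityMeasure P]
    (X X₁ X₂ η : Ω → ℝ)
    (hmX : Measurable X) (hm₁ : Measurable X₁) (hm₂ : Measurable X₂)
    (hmη : Measurable η)
    (hindep : iIndepFun ![X, X₁, X₂, η] P)
    (hX : Measure.map X P = logisticMeasure)
    (hX₁ : Measure.map X₁ P = logisticMeasure)
    (hX₂ : Measure.map X₂ P = logisticMeasure)
    (hη : Measure.map η P = expMeasure 1) :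
    Measure.map X P = Measure.map (fun ω => min (X₁ ω) (X₂ ω) + η ω) P := by
  haveI hPX : IsProbabilityMeasure (Measure.map X P) := Measure.isProbabilityMeasure_map hmX.aemeasurable
  haveI hexpP : IsProbabilityMeasure (expMeasure 1) :=
    isProbabilityMeasure_expMeasure (by norm_num)
  have hmM : Measurable (fun ω => min (X₁ ω) (X₂ ω)) := hm₁.min hm₂
  haveI : IsProbabilityMeasure (Measure.map (fun ω => min (X₁ ω) (X₂ ω)) P) :=
    Measure.isProbabilityMeasure_map hmM.aemeasurable
  -- independence
  have hf_meas : ∀ i, Measurable (![X, X₁, X₂, η] i) := fun i => by fin_cases i <;> assumption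
  have h12 : IndepFun X₁ X₂ P := by
    have h := hindep.indepFun (i := 1) (j := 2) (by decide)
    simpa using h
  have hMη : IndepFun (fun ω => min (X₁ ω) (X₂ ω)) η P := by
    have h := hindep.indepFun_prodMk hf_meas 1 2 3 (by decide) (by decide)
    have h2 := h.comp (φ := fun p : ℝ × ℝ => min p.1 p.2) (ψ := id)
      (measurable_fst.min measurable_snd) measurable_id
    simpa [Function.comp_def] using h2
  -- Ioi value of logistic measure
  have hlogIoi : ∀ s : ℝ, logisticMeasure (Ioi s) = ENNReal.ofReal (1 + Real.exp s)⁻¹ := by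
    intro s
    haveI : IsProbabilityMeasure logisticMeasure := hX ▸ hPX
    rw [← compl_Iic, measure_compl measurableSet_Iic (measure_ne_top _ _), measure_univ,
      logistic_Iic, ← ENNReal.ofReal_one, ← ENNReal.ofReal_sub _ (by positivity)]
    congr 1
    rw [Real.exp_neg]
    have h2 : Real.exp s ≠ 0 := (Real.exp_pos _).ne'
    have h1 : (0:ℝ) < 1 + Real.exp s := by positivity
    have h1' : (0:ℝ) < 1 + (Real.exp s)⁻¹ := by positivity
    field_simp
    ring
  -- CDF of the min
  have hμM_Iic : ∀ s : ℝ, Measure.map (fun ω => min (X₁ ω) (X₂ ω)) P (Iic s)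
      = ENNReal.ofReal (1 - ((1 + Real.exp s)⁻¹) ^ 2) := by
    intro s
    have hIoi : Measure.map (fun ω => min (X₁ ω) (X₂ ω)) P (Ioi s)
        = ENNReal.ofReal (((1 + Real.exp s)⁻¹) ^ 2) := by
      rw [Measure.map_apply hmM measurableSet_Ioi]
      have hset : (fun ω => min (X₁ ω) (X₂ ω)) ⁻¹' Ioi s = X₁ ⁻¹' Ioi s ∩ X₂ ⁻¹' Ioi s := by
        ext ω; simp [lt_min_iff]
      rw [hset, h12.measure_inter_preimage_eq_mul _ _ measurableSet_Ioi measurableSet_Ioi,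
        ← Measure.map_apply hm₁ measurableSet_Ioi, ← Measure.map_apply hm₂ measurableSet_Ioi,
        hX₁, hX₂, hlogIoi, ← ENNReal.ofReal_mul (by positivity), sq]
    rw [← compl_Ioi, measure_compl measurableSet_Ioi (measure_ne_top _ _), measure_univ, hIoi,
      ← ENNReal.ofReal_one, ← ENNReal.ofReal_sub _ (by positivity)]
  -- law of the sum as a product-measure pushforward
  have hmap : Measure.map (fun ω => min (X₁ ω) (X₂ ω) + η ω) P
      = ((Measure.map (fun ω => min (X₁ ω) (X₂ ω)) P).prod (expMeasure 1)).map
          (fun p : ℝ × ℝ => p.1 + p.2) := by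
    rw [← hη, ← (indepFun_iff_map_prod_eq_prod_map_map hmM.aemeasurable hmη.aemeasurable).mp hMη,
      Measure.map_map (by fun_prop : Measurable fun p : ℝ × ℝ => p.1 + p.2) (hmM.prodMk hmη)]
    congr 1
  -- extensionality on Iic
  refine Measure.ext_of_Iic _ _ fun x => ?_
  rw [hX, logistic_Iic, hmap,
    Measure.map_apply (by fun_prop : Measurable fun p : ℝ × ℝ => p.1 + p.2) measurableSet_Iic,
    Measure.prod_apply_symm ((by fun_prop : Measurable fun p : ℝ × ℝ => p.1 + p.2) measurableSet_Iic)]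
  have hpre : ∀ t : ℝ, (fun m => (m, t)) ⁻¹' ((fun p : ℝ × ℝ => p.1 + p.2) ⁻¹' Iic x)
      = Iic (x - t) := by
    intro t; ext m; simp [le_sub_iff_add_le]
  have step1 : (∫⁻ t, Measure.map (fun ω => min (X₁ ω) (X₂ ω)) P
        ((fun m => (m, t)) ⁻¹' ((fun p : ℝ × ℝ => p.1 + p.2) ⁻¹' Iic x)) ∂(expMeasure 1))
      = ∫⁻ t, ENNReal.ofReal (1 - ((1 + Real.exp (x - t))⁻¹) ^ 2) ∂(expMeasure 1) := by
    apply lintegral_congr; intro t; rw [hpre t, hμM_Iic]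
  rw [step1]
  -- unfold the exponential measure as a density
  have hexp : expMeasure 1
      = volume.withDensity (fun t => ENNReal.ofReal (if 0 ≤ t then Real.exp (-t) else 0)) := by
    rw [expMeasure, gammaMeasure]
    congr 1
    funext t
    rw [gammaPDF_eq]
    simp [Real.Gamma_one]
  have hGmeas : Measurable fun t : ℝ => ENNReal.ofReal (1 - ((1 + Real.exp (x - t))⁻¹) ^ 2) :=
    ENNReal.measurable_ofReal.comp (measurable_const.sub
      (((measurable_const.add (Real.measurable_exp.comp
        (measurable_const.sub measurable_id))).inv).pow_const 2))
  have hfmeas : Measurable fun t : ℝ => ENNReal.ofReal (if 0 ≤ t then Real.exp (-t) else 0) :=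
    ENNReal.measurable_ofReal.comp (Measurable.ite measurableSet_Ici
      (Real.measurable_exp.comp measurable_neg) measurable_const)
  rw [hexp, lintegral_withDensity_eq_lintegral_mul volume hfmeas hGmeas]
  have step2 : (∫⁻ t, ((fun t => ENNReal.ofReal (if 0 ≤ t then Real.exp (-t) else 0)) *
        (fun t : ℝ => ENNReal.ofReal (1 - ((1 + Real.exp (x - t))⁻¹) ^ 2))) t)
      = ∫⁻ t, ENNReal.ofReal ((Ici (0:ℝ)).indicator
          (fun t => Real.exp (-t) * (1 - ((1 + Real.exp (x - t))⁻¹) ^ 2)) t) := by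
    apply lintegral_congr; intro t
    simp only [Pi.mul_apply]
    rw [← ENNReal.ofReal_mul (by split_ifs with h; exacts [(Real.exp_pos _).le, le_rfl])]
    congr 1
    by_cases h : 0 ≤ t <;> simp [Set.indicator_apply, h]
  rw [step2]
  have hint : Integrable ((Ici (0:ℝ)).indicator
      (fun t => Real.exp (-t) * (1 - ((1 + Real.exp (x - t))⁻¹) ^ 2))) := by
    rw [integrable_indicator_iff measurableSet_Ici]
    rw [IntegrableOn, ← restrict_Ioi_eq_restrict_Ici]
    exact conv_integrableOn x
  rw [← ofReal_integral_eq_lintegral_ofReal hint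
    (Filter.Eventually.of_forall (Set.indicator_nonneg fun t _ => conv_nonneg x t)),
    integral_indicator measurableSet_Ici, integral_Ici_eq_integral_Ioi, conv_integral]
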